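/- Let u : 2^E → ℝ be an ordinally concave function on the subsets of a finite set E, and let X ∈ D*_u have minimum cardinality among all members of D*_u. Then for every linear ordering L = (e_1, …, e_k) of the elements of X we have u(∅) < u(L_1) < u(L_2) < ⋯ < u(L_k), where L_i = {e_1,…,e_i} and L_k = X. -/

import Mathlib

namespace OrdConc

variable {E : Type*} [DecidableEq E]

/-- Membership of an optional element in a finite set: the extra symbol `∅`
(encoded as `none`) always counts as a member of `S ∪ {∅}`. -/
def mem? (x : Option E) (S : Finset E) : Prop :=
  ∀ a : E, x = some a → a ∈ S

/-- `X − x` (no-op when `x = none`, i.e. the symbol `∅`). -/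
def rem (X : Finset E) (x : Option E) : Finset E :=
  x.elim X fun a => X.erase a

/-- `X + x` (no-op when `x = none`, i.e. the symbol `∅`). -/
def add (X : Finset E) (x : Option E) : Finset E :=
  x.elim X fun a => insert a X

/-- `X − x + x'`. -/
def move (X : Finset E) (x x' : Option E) : Finset E :=
  add (rem X x) x'

/-- Ordinal concavity (Definition 1). -/
def OrdinalConcave (u : Finset E → ℝ) : Prop :=
  ∀ X X' : Finset E, ∀ x ∈ X \ X', ∃ x' : Option E, mem? x' (X' \ X) ∧
    (u X < u (move X (some x) x') ∨
     u X' < u (move X' x' (some x)) ∨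
     (u X = u (move X (some x) x') ∧ u X' = u (move X' x' (some x))))

/-- Ordinal weak-concavity (Definition 2). -/
def OrdinalWeakConcave (u : Finset E → ℝ) : Prop :=
  ∀ X X' : Finset E, X ≠ X' → ∃ x x' : Option E, x ≠ x' ∧
    mem? x (X \ X') ∧ mem? x' (X' \ X) ∧
    (u X < u (move X x x') ∨
     u X' < u (move X' x' x) ∨
     (u X = u (move X x x') ∧ u X' = u (move X' x' x)))

/-- An M♮-convex set (family) of subsets of `E`. -/
def MnatConvex (F : Set (Finset E)) : Prop :=
  ∀ X ∈ F, ∀ X' ∈ F, ∀ x ∈ X \ X', ∃ x' : Option E, mem? x' (X' \ X) ∧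
    move X (some x) x' ∈ F ∧ move X' x' (some x) ∈ F

/-- The simultaneous exchange property (†). -/
def Dagger (F : Set (Finset E)) : Prop :=
  ∀ X ∈ F, ∀ X' ∈ F, X ≠ X' → ∃ x x' : Option E, x ≠ x' ∧
    mem? x (X \ X') ∧ mem? x' (X' \ X) ∧
    move X x x' ∈ F ∧ move X' x' x ∈ F

/-- `D*_u`, the family of global maximizers of `u`. -/
def Dstar (u : Finset E → ℝ) : Set (Finset E) :=
  {X | ∀ Z : Finset E, u Z ≤ u X}

/-- The neighborhood `N(X)`. -/
def Nbhd [Fintype E] (X : Finset E) : Set (Finset E) :=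
  {Z | ∃ x x' : Option E, mem? x X ∧ mem? x' (Finset.univ \ X) ∧ Z = move X x x'}

/-- The interval `[X, Y]` in `2^E`. -/
def Interval (X Y : Finset E) : Set (Finset E) :=
  {Z | X ⊆ Z ∧ Z ⊆ Y}

/-- `C_u(X,Y)`, the maximizers of `u` over the interval `[X,Y]`. -/
def CuI (u : Finset E → ℝ) (X Y : Finset E) : Set (Finset E) :=
  {Z | Z ∈ Interval X Y ∧ ∀ W ∈ Interval X Y, u W ≤ u Z}

/-- `C_u(X)`, the maximizers of `u` among all subsets of `X`. -/
def Cu (u : Finset E → ℝ) (X : Finset E) : Set (Finset E) :=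
  {Z | Z ⊆ X ∧ ∀ W ⊆ X, u W ≤ u Z}

/-- Cardinality of the symmetric difference `X Δ Z`. -/
def sdCard (X Z : Finset E) : ℕ := (X \ Z ∪ Z \ X).card

/-- The strict lexicographic order on `ℝ²`. -/
def lexLt (p q : ℝ × ℝ) : Prop := p.1 < q.1 ∨ (p.1 = q.1 ∧ p.2 < q.2)

/-- The (non-strict) lexicographic order on `ℝ²`. -/
def lexLe (p q : ℝ × ℝ) : Prop := lexLt p q ∨ p = q

theorem every_ordering_of_min_maximizer_increasing
    {E : Type*} [DecidableEq E] [Fintype E]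
    (u : Finset E → ℝ) (hu : OrdinalConcave u)
    (X : Finset E) (hX : X ∈ Dstar u)
    (hmin : ∀ W ∈ Dstar u, X.card ≤ W.card)
    (L : List E) (hnd : L.Nodup) (hL : L.toFinset = X) :
    ∀ i < L.length, u (L.take i).toFinset < u (L.take (i + 1)).toFinset := by
  intro i hi
  set Y := (L.take i).toFinset with hYdef
  set x := L.get ⟨i, hi⟩ with hxdef
  have hxX : x ∈ X := by
    rw [← hL]; exact List.mem_toFinset.2 (L.get_mem _)
  have hxY : x ∉ Y := by
    intro hmem
    have htake : x ∈ L.take i := List.mem_toFinset.1 hmem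
    have hdrop : x ∈ L.drop i := by
      rw [List.drop_eq_getElem_cons hi]; exact List.mem_cons_self
    have hnd' : (L.take i ++ L.drop i).Nodup := by
      rw [List.take_append_drop]; exact hnd
    exact (List.disjoint_of_nodup_append hnd') htake hdrop
  have hYX : Y ⊆ X := by
    intro a ha
    rw [← hL]
    exact List.mem_toFinset.2 (List.mem_of_mem_take (List.mem_toFinset.1 ha))
  obtain ⟨x', hm, h⟩ := hu X Y x (Finset.mem_sdiff.2 ⟨hxX, hxY⟩)
  have hx' : x' = none := by
    cases x' with
    | none => rfl
    | some a =>
      have := hm a rfl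
      rw [Finset.mem_sdiff] at this
      exact absurd (hYX this.1) this.2
  subst hx'
  simp only [move, rem, add, Option.elim] at h
  have hgoal : (L.take (i + 1)).toFinset = insert x Y := by
    have : L.take (i + 1) = L.take i ++ [x] := by
      rw [hxdef]
      simp only [← List.concat_eq_append]; exact (List.take_concat_get hi).symm
    rw [this]
    ext a; simp [hYdef, or_comm]
  rw [hgoal]
  rcases h with h1 | h2 | h3
  · exact absurd (hX (X.erase x)) (not_le.2 h1)
  · exact h2
  · exfalso
    have hmax : X.erase x ∈ Dstar u := by
      intro Z
      calc u Z ≤ u X := hX Z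
        _ = u (X.erase x) := h3.1
    have := hmin _ hmax
    have hc : (X.erase x).card < X.card := Finset.card_erase_lt_of_mem hxX
    omega
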